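/- arXiv:1810.02038 — 5 statements merged into one kernel-verified Lean document; each statement's English description precedes it below -/
import Mathlib

section
/- The function (t_1,...,t_n) ↦ log det(∑_{i=1}^n e^{t_i} v_i v_i^T) is convex on ℝ^n, for any vectors v_1,...,v_n in ℝ^k such that the matrix ∑ e^{t_i} v_i v_i^T is positive definite for all t (e.g. when v_1,...,v_n span ℝ^k). -/
open Real

private lemma key_det (k n : ℕ) (v : Fin n → Fin k → ℝ) (c : Fin n → ℝ) :
    (Nat.factorial k : ℝ) * (∑ i, c i • Matrix.vecMulVec (v i) (v i)).det
      = ∑ f : Fin k → Fin n,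
          (∏ j, c (f j)) * (Matrix.of fun j l => v (f j) l).det ^ 2 := by
  classical
  set D : (Fin k → Fin n) → ℝ := fun f => (Matrix.of fun j l => v (f j) l).det with hD
  -- Step 1: multilinear expansion of the determinant over rows
  have h1 : (∑ i, c i • Matrix.vecMulVec (v i) (v i)).det
      = ∑ f : Fin k → Fin n, (∏ j, c (f j) * v (f j) j) * D f := by
    have e0 : (∑ i, c i • Matrix.vecMulVec (v i) (v i))
        = fun j : Fin k => ∑ i : Fin n, (c i * v i j) • (v i) := by
      funext j l
      simp [Matrix.sum_apply, Matrix.vecMulVec_apply, mul_assoc, smul_eq_mul,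
        Finset.sum_apply]
    have e1 : (∑ i, c i • Matrix.vecMulVec (v i) (v i)).det
        = (Matrix.detRowAlternating (R := ℝ) (n := Fin k)).toMultilinearMap
            (fun j : Fin k => ∑ i : Fin n, (c i * v i j) • (v i)) := by
      rw [e0]; rfl
    rw [e1, MultilinearMap.map_sum]
    refine Finset.sum_congr rfl fun f _ => ?_
    rw [MultilinearMap.map_smul_univ, smul_eq_mul]
    rfl
  -- Step 2: symmetrization over permutations
  have h2 : ∀ σ : Equiv.Perm (Fin k),
      (∑ f : Fin k → Fin n, (∏ j, c (f j) * v (f j) j) * D f)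
      = ∑ f : Fin k → Fin n,
          (∏ j, c (f j)) * ((Equiv.Perm.sign σ : ℝ) * ∏ j, v (f (σ j)) j) * D f := by
    intro σ
    have e : ∀ f : Fin k → Fin n,
        (∏ j, c (f (σ j)) * v (f (σ j)) j) * D (f ∘ σ)
        = (∏ j, c (f j)) * ((Equiv.Perm.sign σ : ℝ) * ∏ j, v (f (σ j)) j) * D f := by
      intro f
      have hDperm : D (f ∘ σ) = (Equiv.Perm.sign σ : ℝ) * D f := by
        have : (Matrix.of fun j l => v ((f ∘ σ) j) l)
            = (Matrix.of fun j l => v (f j) l).submatrix σ id := by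
          funext j l; rfl
        simp only [hD, this, Matrix.det_permute]
      have hc : (∏ j, c (f (σ j))) = ∏ j, c (f j) :=
        Equiv.prod_comp σ (fun j => c (f j))
      rw [Finset.prod_mul_distrib, hDperm, hc]
      ring
    calc (∑ f : Fin k → Fin n, (∏ j, c (f j) * v (f j) j) * D f)
        = ∑ f : Fin k → Fin n, (∏ j, c (f (σ j)) * v (f (σ j)) j) * D (f ∘ σ) := by
          exact (Equiv.sum_comp (Equiv.arrowCongr σ.symm (Equiv.refl (Fin n)))
            (fun f => (∏ j, c (f j) * v (f j) j) * D f)).symm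
      _ = _ := Finset.sum_congr rfl fun f _ => e f
  have hcard : ((Finset.univ : Finset (Equiv.Perm (Fin k))).card : ℝ) = (Nat.factorial k : ℝ) := by
    rw [Finset.card_univ, Fintype.card_perm, Fintype.card_fin]
  calc (Nat.factorial k : ℝ) * (∑ i, c i • Matrix.vecMulVec (v i) (v i)).det
      = ∑ σ : Equiv.Perm (Fin k),
          (∑ f : Fin k → Fin n, (∏ j, c (f j) * v (f j) j) * D f) := by
        rw [h1, Finset.sum_const, nsmul_eq_mul, ← hcard]
    _ = ∑ σ : Equiv.Perm (Fin k), ∑ f : Fin k → Fin n,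
          (∏ j, c (f j)) * ((Equiv.Perm.sign σ : ℝ) * ∏ j, v (f (σ j)) j) * D f := by
        exact Finset.sum_congr rfl fun σ _ => h2 σ
    _ = ∑ f : Fin k → Fin n, ∑ σ : Equiv.Perm (Fin k),
          (∏ j, c (f j)) * ((Equiv.Perm.sign σ : ℝ) * ∏ j, v (f (σ j)) j) * D f := by
        rw [Finset.sum_comm]
    _ = ∑ f : Fin k → Fin n, (∏ j, c (f j)) * D f ^ 2 := by
        refine Finset.sum_congr rfl fun f _ => ?_
        have : (∑ σ : Equiv.Perm (Fin k),
            (Equiv.Perm.sign σ : ℝ) * ∏ j, v (f (σ j)) j) = D f := by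
          show _ = (Matrix.of fun j l => v (f j) l).det
          rw [Matrix.det_apply']
          rfl
        calc (∑ σ : Equiv.Perm (Fin k),
              (∏ j, c (f j)) * ((Equiv.Perm.sign σ : ℝ) * ∏ j, v (f (σ j)) j) * D f)
            = (∏ j, c (f j)) * (∑ σ : Equiv.Perm (Fin k),
                (Equiv.Perm.sign σ : ℝ) * ∏ j, v (f (σ j)) j) * D f := by
              simp only [Finset.mul_sum, Finset.sum_mul]
          _ = (∏ j, c (f j)) * D f ^ 2 := by rw [this]; ring

theorem stmt0 (k n : ℕ) (v : Fin n → Fin k → ℝ)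
    (hpd : ∀ t : Fin n → ℝ,
      (∑ i, Real.exp (t i) • Matrix.vecMulVec (v i) (v i)).PosDef) :
    ConvexOn ℝ Set.univ (fun t : Fin n → ℝ =>
      Real.log (∑ i, Real.exp (t i) • Matrix.vecMulVec (v i) (v i)).det) := by
  classical
  set S : (Fin n → ℝ) → ℝ :=
    fun t => (∑ i, Real.exp (t i) • Matrix.vecMulVec (v i) (v i)).det with hS
  have hSpos : ∀ t, 0 < S t := fun t => (hpd t).det_pos
  set D : (Fin k → Fin n) → ℝ := fun f => (Matrix.of fun j l => v (f j) l).det with hD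
  have hkey : ∀ t : Fin n → ℝ,
      (Nat.factorial k : ℝ) * S t = ∑ f : Fin k → Fin n, Real.exp (∑ j, t (f j)) * D f ^ 2 := by
    intro t
    rw [hS, key_det k n v (fun i => Real.exp (t i))]
    refine Finset.sum_congr rfl fun f _ => ?_
    rw [Real.exp_sum]
  refine ⟨convex_univ, fun x _ y _ a b ha hb hab => ?_⟩
  rcases eq_or_lt_of_le ha with ha0 | ha
  · have hb1 : b = 1 := by linarith
    simp [← ha0, hb1]
  rcases eq_or_lt_of_le hb with hb0 | hb
  · have ha1 : a = 1 := by linarith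
    simp [← hb0, ha1]
  -- now 0 < a, 0 < b, a + b = 1
  have hfact : (0 : ℝ) < (Nat.factorial k : ℝ) := by positivity
  -- main inequality via Hölder
  have hmain : (Nat.factorial k : ℝ) * S (a • x + b • y)
      ≤ ((Nat.factorial k : ℝ) * S x) ^ a * ((Nat.factorial k : ℝ) * S y) ^ b := by
    rw [hkey]
    have hconj : Real.HolderConjugate a⁻¹ b⁻¹ := by
      constructor
      · rw [inv_inv, inv_inv, inv_one]; exact hab
      · exact inv_pos.mpr ha
      · exact inv_pos.mpr hb
    set F : (Fin k → Fin n) → ℝ :=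
      fun f => (Real.exp (∑ j, x (f j)) * D f ^ 2) ^ a with hF
    set G : (Fin k → Fin n) → ℝ :=
      fun f => (Real.exp (∑ j, y (f j)) * D f ^ 2) ^ b with hG
    have hterm : ∀ f : Fin k → Fin n,
        Real.exp (∑ j, (a • x + b • y) (f j)) * D f ^ 2 = F f * G f := by
      intro f
      have hsum : (∑ j, (a • x + b • y) (f j))
          = (∑ j, x (f j)) * a + (∑ j, y (f j)) * b := by
        rw [Finset.sum_mul, Finset.sum_mul, ← Finset.sum_add_distrib]
        refine Finset.sum_congr rfl fun j _ => ?_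
        simp [mul_comm]
      have hD2 : D f ^ 2 = (D f ^ 2) ^ a * (D f ^ 2) ^ b := by
        rcases eq_or_lt_of_le (sq_nonneg (D f)) with h0 | h0
        · rw [← h0, Real.zero_rpow ha.ne', Real.zero_rpow hb.ne', mul_zero]
        · rw [← Real.rpow_add h0, hab, Real.rpow_one]
      rw [hsum, Real.exp_add, Real.exp_mul, Real.exp_mul]
      show _ = (Real.exp (∑ j, x (f j)) * D f ^ 2) ^ a
          * (Real.exp (∑ j, y (f j)) * D f ^ 2) ^ b
      rw [Real.mul_rpow (Real.exp_pos _).le (sq_nonneg _),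
        Real.mul_rpow (Real.exp_pos _).le (sq_nonneg _)]
      conv_lhs => rw [hD2]
      ring
    calc (∑ f : Fin k → Fin n, Real.exp (∑ j, (a • x + b • y) (f j)) * D f ^ 2)
        = ∑ f : Fin k → Fin n, F f * G f :=
          Finset.sum_congr rfl fun f _ => hterm f
      _ ≤ (∑ f : Fin k → Fin n, F f ^ a⁻¹) ^ (1 / a⁻¹)
            * (∑ f : Fin k → Fin n, G f ^ b⁻¹) ^ (1 / b⁻¹) := by
          refine Real.inner_le_Lp_mul_Lq_of_nonneg Finset.univ hconj
            (fun f _ => ?_) (fun f _ => ?_)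
          · exact Real.rpow_nonneg (by positivity) _
          · exact Real.rpow_nonneg (by positivity) _
      _ = ((Nat.factorial k : ℝ) * S x) ^ a * ((Nat.factorial k : ℝ) * S y) ^ b := by
          have hFe : (∑ f : Fin k → Fin n, F f ^ a⁻¹) = (Nat.factorial k : ℝ) * S x := by
            rw [hkey]
            refine Finset.sum_congr rfl fun f _ => ?_
            exact Real.rpow_rpow_inv (by positivity) ha.ne'
          have hGe : (∑ f : Fin k → Fin n, G f ^ b⁻¹) = (Nat.factorial k : ℝ) * S y := by
            rw [hkey]
            refine Finset.sum_congr rfl fun f _ => ?_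
            exact Real.rpow_rpow_inv (by positivity) hb.ne'
          rw [hFe, hGe, one_div, one_div, inv_inv, inv_inv]
  have h2 : S (a • x + b • y) ≤ S x ^ a * S y ^ b := by
    have e : ((Nat.factorial k : ℝ) * S x) ^ a * ((Nat.factorial k : ℝ) * S y) ^ b
        = (Nat.factorial k : ℝ) * (S x ^ a * S y ^ b) := by
      rw [Real.mul_rpow hfact.le (hSpos x).le, Real.mul_rpow hfact.le (hSpos y).le]
      have : (Nat.factorial k : ℝ) ^ a * (Nat.factorial k : ℝ) ^ b = (Nat.factorial k : ℝ) := by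
        rw [← Real.rpow_add hfact, hab, Real.rpow_one]
      calc (Nat.factorial k : ℝ) ^ a * S x ^ a * ((Nat.factorial k : ℝ) ^ b * S y ^ b)
          = ((Nat.factorial k : ℝ) ^ a * (Nat.factorial k : ℝ) ^ b) * (S x ^ a * S y ^ b) := by ring
        _ = (Nat.factorial k : ℝ) * (S x ^ a * S y ^ b) := by rw [this]
    rw [e] at hmain
    exact le_of_mul_le_mul_left hmain hfact
  show Real.log (S (a • x + b • y)) ≤ a • Real.log (S x) + b • Real.log (S y)
  rw [smul_eq_mul, smul_eq_mul]
  calc Real.log (S (a • x + b • y)) ≤ Real.log (S x ^ a * S y ^ b) :=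
        Real.log_le_log (hSpos _) h2
    _ = a * Real.log (S x) + b * Real.log (S y) := by
        rw [Real.log_mul (Real.rpow_pos_of_pos (hSpos x) a).ne'
          (Real.rpow_pos_of_pos (hSpos y) b).ne',
          Real.log_rpow (hSpos x), Real.log_rpow (hSpos y)]
end

section
/- For k×k real symmetric positive semidefinite matrices A_1,...,A_n, the function (x_1,...,x_n) ↦ det(∑_{i=1}^n x_i A_i) is a homogeneous polynomial of degree k of the form ∑_{1 ≤ j_1,...,j_k ≤ n} b_{j_1,...,j_k} x_{j_1}···x_{j_k} with all coefficients b_{j_1,...,j_k} ≥ 0. -/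
open Matrix Finset Equiv
open scoped MatrixOrder

-- general multilinear row expansion lemma
lemma det_rows_sum {k : ℕ} {ι : Type*} [Fintype ι]
    (v : Fin k → ι → (Fin k → ℝ)) :
    (Matrix.of fun p => ∑ i, v p i).det
      = ∑ r : Fin k → ι, (Matrix.of fun p => v p (r p)).det := by
  classical
  exact (Matrix.detRowAlternating : (Fin k → ℝ) [⋀^Fin k]→ₗ[ℝ] ℝ).toMultilinearMap.map_sum
    (g := v)

lemma det_rows_smul {k : ℕ} (c : Fin k → ℝ) (v : Fin k → (Fin k → ℝ)) :
    (Matrix.of fun p => c p • v p).det = (∏ p, c p) * (Matrix.of v).det := by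
  classical
  exact
    (Matrix.detRowAlternating : (Fin k → ℝ) [⋀^Fin k]→ₗ[ℝ] ℝ).toMultilinearMap.map_smul_univ c v

theorem stmt1 (k n : ℕ) (A : Fin n → Matrix (Fin k) (Fin k) ℝ)
    (hpsd : ∀ i, (A i).PosSemidef) :
    ∃ b : (Fin k → Fin n) → ℝ, (∀ j, 0 ≤ b j) ∧
      ∀ x : Fin n → ℝ,
        (∑ i, x i • A i).det = ∑ j : Fin k → Fin n, b j * ∏ m, x (j m) := by
  classical
  set C : Fin n → Matrix (Fin k) (Fin k) ℝ := fun i => CFC.sqrt (A i) with hCdef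
  have hA : ∀ i p q, A i p q = ∑ r, C i p r * C i q r := by
    intro i p q
    have h1 : C i * C i = A i := CFC.sqrt_mul_sqrt_self (A i) (hpsd i).nonneg
    have h2 : (C i).IsHermitian := (CFC.sqrt_nonneg (A i)).posSemidef.isHermitian
    rw [← h1, Matrix.mul_apply]
    refine Finset.sum_congr rfl fun r _ => ?_
    have := h2.apply q r
    simp only [star_trivial] at this
    rw [this]
  set b0 : (Fin k → Fin n) → ℝ := fun j => (Matrix.of fun p q => A (j p) p q).det with hb0
  -- main expansion
  have key : ∀ x : Fin n → ℝ, (∑ i, x i • A i).det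
      = ∑ j : Fin k → Fin n, b0 j * ∏ m, x (j m) := by
    intro x
    have h1 : (∑ i, x i • A i) = Matrix.of fun p => ∑ i, (fun q => x i * A i p q) := by
      ext p q
      simp [Matrix.sum_apply]
    rw [h1]
    have h2 := det_rows_sum (fun p i => (fun q => x i * A i p q))
    rw [h2]
    refine Finset.sum_congr rfl fun j _ => ?_
    have h3 : (Matrix.of fun p => (fun q => x (j p) * A (j p) p q))
        = Matrix.of fun p => x (j p) • (fun q => A (j p) p q) := rfl
    rw [h3, det_rows_smul]
    rw [mul_comm]
  -- nonnegativity of symmetrized coefficients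
  have sym_nonneg : ∀ j : Fin k → Fin n,
      0 ≤ ∑ σ : Perm (Fin k), b0 (j ∘ σ) := by
    intro j
    have expand : ∀ σ : Perm (Fin k), b0 (j ∘ σ)
        = ∑ c : Fin k → Fin k, (∏ p, C (j (σ p)) p (c p)) *
            (Matrix.of fun p q => C (j (σ p)) q (c p)).det := by
      intro σ
      have h1 : (Matrix.of fun p q => A (j (σ p)) p q)
          = Matrix.of fun p => ∑ r, (fun q => C (j (σ p)) p r * C (j (σ p)) q r) := by
        ext p q
        simp [hA, Finset.sum_apply]
      have h2 := det_rows_sum (fun p r => (fun q : Fin k => C (j (σ p)) p r * C (j (σ p)) q r))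
      calc b0 (j ∘ σ) = (Matrix.of fun p => ∑ r, (fun q => C (j (σ p)) p r * C (j (σ p)) q r)).det := by
            rw [hb0]; exact congrArg Matrix.det h1
        _ = ∑ c : Fin k → Fin k, (Matrix.of fun p => (fun q => C (j (σ p)) p (c p) * C (j (σ p)) q (c p))).det := h2
        _ = ∑ c : Fin k → Fin k, (∏ p, C (j (σ p)) p (c p)) *
              (Matrix.of fun p q => C (j (σ p)) q (c p)).det := by
            refine Finset.sum_congr rfl fun c _ => ?_
            have : (Matrix.of fun p => (fun q => C (j (σ p)) p (c p) * C (j (σ p)) q (c p)))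
                = Matrix.of fun p => (C (j (σ p)) p (c p)) • (fun q => C (j (σ p)) q (c p)) := rfl
            rw [this, det_rows_smul]
    -- reindex c ↦ d ∘ σ
    have expand2 : ∀ σ : Perm (Fin k), b0 (j ∘ σ)
        = ∑ d : Fin k → Fin k, (∏ p, C (j (σ p)) p (d (σ p))) *
            (Matrix.of fun p q => C (j (σ p)) q (d (σ p))).det := by
      intro σ
      rw [expand σ]
      have hbij : Function.Bijective (fun d : Fin k → Fin k => d ∘ σ) := by
        constructor
        · intro a b hab
          funext p
          have := congrFun hab (σ.symm p)
          simpa using this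
        · intro c
          exact ⟨c ∘ σ.symm, by funext p; simp⟩
      exact (Fintype.sum_bijective _ hbij _ _ (fun d => rfl)).symm
    have swap : ∑ σ : Perm (Fin k), b0 (j ∘ σ)
        = ∑ d : Fin k → Fin k, ∑ σ : Perm (Fin k),
            (∏ p, C (j (σ p)) p (d (σ p))) *
            (Matrix.of fun p q => C (j (σ p)) q (d (σ p))).det := by
      rw [Finset.sum_comm]
      exact Finset.sum_congr rfl fun σ _ => expand2 σ
    rw [swap]
    refine Finset.sum_nonneg fun d _ => ?_
    -- fixed d: sum over σ is (det W)^2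
    set W : Matrix (Fin k) (Fin k) ℝ := Matrix.of fun m q => C (j m) q (d m) with hW
    have hterm : ∀ σ : Perm (Fin k),
        (∏ p, C (j (σ p)) p (d (σ p))) *
          (Matrix.of fun p q => C (j (σ p)) q (d (σ p))).det
        = ((Perm.sign σ : ℤ) : ℝ) * (∏ p, W (σ p) p) * W.det := by
      intro σ
      have h1 : (Matrix.of fun p q => C (j (σ p)) q (d (σ p))) = W.submatrix σ id := by
        ext p q; rfl
      have h2 : (∏ p, C (j (σ p)) p (d (σ p))) = ∏ p, W (σ p) p := rfl
      rw [h1, h2, Matrix.det_permute]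
      ring
    have hsum : ∑ σ : Perm (Fin k),
        (∏ p, C (j (σ p)) p (d (σ p))) *
          (Matrix.of fun p q => C (j (σ p)) q (d (σ p))).det
        = W.det * W.det := by
      rw [Finset.sum_congr rfl fun σ _ => hterm σ]
      rw [← Finset.sum_mul]
      congr 1
      rw [Matrix.det_apply']
    rw [hsum]
    exact mul_self_nonneg _
  -- define b
  refine ⟨fun j => (k.factorial : ℝ)⁻¹ * ∑ σ : Perm (Fin k), b0 (j ∘ σ), fun j => ?_, fun x => ?_⟩
  · exact mul_nonneg (by positivity) (sym_nonneg j)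
  · rw [key x]
    have hre : ∀ σ : Perm (Fin k), ∑ j : Fin k → Fin n, b0 (j ∘ σ) * ∏ m, x (j m)
        = ∑ j : Fin k → Fin n, b0 j * ∏ m, x (j m) := by
      intro σ
      have hbij : Function.Bijective (fun j : Fin k → Fin n => j ∘ σ) := by
        constructor
        · intro a b hab
          funext p
          have := congrFun hab (σ.symm p)
          simpa using this
        · intro c
          exact ⟨c ∘ σ.symm, by funext p; simp⟩
      refine Fintype.sum_bijective _ hbij _ _ fun j => ?_
      show b0 (j ∘ σ) * ∏ m, x (j m) = b0 (j ∘ σ) * ∏ m, x (j (σ m))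
      congr 1
      exact (Equiv.prod_comp σ fun m => x (j m)).symm
    have c0 : (k.factorial : ℝ) ≠ 0 := by positivity
    refine Eq.symm ?_
    calc ∑ j : Fin k → Fin n, ((k.factorial : ℝ)⁻¹ * ∑ σ : Perm (Fin k), b0 (j ∘ σ)) * ∏ m, x (j m)
        = ∑ j : Fin k → Fin n, ∑ σ : Perm (Fin k),
            (k.factorial : ℝ)⁻¹ * (b0 (j ∘ σ) * ∏ m, x (j m)) := by
          refine Finset.sum_congr rfl fun j _ => ?_
          rw [mul_assoc, Finset.sum_mul, Finset.mul_sum]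
      _ = ∑ σ : Perm (Fin k), ∑ j : Fin k → Fin n,
            (k.factorial : ℝ)⁻¹ * (b0 (j ∘ σ) * ∏ m, x (j m)) := Finset.sum_comm
      _ = ∑ σ : Perm (Fin k), (k.factorial : ℝ)⁻¹ *
            ∑ j : Fin k → Fin n, b0 (j ∘ σ) * ∏ m, x (j m) := by
          refine Finset.sum_congr rfl fun σ _ => (Finset.mul_sum _ _ _).symm
      _ = ∑ σ : Perm (Fin k), (k.factorial : ℝ)⁻¹ *
            ∑ j : Fin k → Fin n, b0 j * ∏ m, x (j m) := by
          refine Finset.sum_congr rfl fun σ _ => by rw [hre σ]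
      _ = ∑ j : Fin k → Fin n, b0 j * ∏ m, x (j m) := by
          rw [Finset.sum_const, Finset.card_univ, Fintype.card_perm, Fintype.card_fin,
            nsmul_eq_mul, ← mul_assoc, mul_inv_cancel₀ c0, one_mul]
end

section
/- For any x ∈ ℝ, ∫_0^∞ (1/(2√(π y))) e^{-x²/(4y)} e^{-y} dy = (1/2) e^{-|x|}. -/
open MeasureTheory Real Set

lemma sq_image : (fun t : ℝ => t ^ 2) '' Ioi 0 = Ioi 0 := by
  ext y
  constructor
  · rintro ⟨t, ht, rfl⟩
    exact pow_pos (mem_Ioi.mp ht) 2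
  · intro hy
    exact ⟨Real.sqrt y, Real.sqrt_pos.2 hy, Real.sq_sqrt (le_of_lt hy)⟩

lemma sub_image {b : ℝ} (hb : 0 < b) : (fun t : ℝ => t - b / t) '' Ioi 0 = univ := by
  ext u
  simp only [mem_univ, iff_true, mem_image, mem_Ioi]
  set s := Real.sqrt (u ^ 2 + 4 * b) with hs
  have hs2 : s ^ 2 = u ^ 2 + 4 * b := Real.sq_sqrt (by positivity)
  have hsu : |u| < s := by
    have : |u| = Real.sqrt (u ^ 2) := (Real.sqrt_sq_eq_abs u).symm
    rw [this]
    exact Real.sqrt_lt_sqrt (by positivity) (by linarith)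
  have ht : 0 < (u + s) / 2 := by
    have := abs_le.mp (le_of_lt hsu)
    linarith [neg_abs_le u, le_abs_self u]
  have h0 : (0 : ℝ) < u + s := by linarith
  refine ⟨(u + s) / 2, ht, ?_⟩
  field_simp [h0.ne']
  nlinarith [hs2]

lemma inv_image {b : ℝ} (hb : 0 < b) : (fun t : ℝ => b / t) '' Ioi 0 = Ioi 0 := by
  ext y
  constructor
  · rintro ⟨t, ht, rfl⟩
    exact div_pos hb ht
  · intro hy
    exact ⟨b / y, div_pos hb hy, by field_simp⟩

lemma glasser_integrable {b : ℝ} (hb : 0 < b) :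
    IntegrableOn (fun t : ℝ => Real.exp (-(t - b / t) ^ 2)) (Ioi 0) := by
  have hc : ContinuousOn (fun t : ℝ => Real.exp (-(t - b / t) ^ 2)) (Ioi 0) :=
    Real.continuous_exp.comp_continuousOn
      (((continuousOn_id.sub (continuousOn_const.div continuousOn_id
        fun t ht => ne_of_gt ht)).pow 2).neg)
  apply Integrable.mono' (((integrable_exp_neg_mul_sq one_pos).const_mul
    (Real.exp (2 * b))).integrableOn)
  · exact hc.aestronglyMeasurable measurableSet_Ioi
  · filter_upwards [ae_restrict_mem measurableSet_Ioi] with t ht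
    rw [Real.norm_eq_abs, abs_of_nonneg (Real.exp_pos _).le, ← Real.exp_add]
    apply Real.exp_le_exp.2
    have hbt : b / t * t = b := div_mul_cancel₀ b (ne_of_gt ht)
    nlinarith [sq_nonneg (b / t)]

lemma glasser_half {b : ℝ} (hb : 0 < b) :
    ∫ t in Ioi (0 : ℝ), Real.exp (-(t - b / t) ^ 2) = Real.sqrt Real.pi / 2 := by
  have hderiv2 : ∀ t ∈ Ioi (0 : ℝ),
      HasDerivWithinAt (fun t : ℝ => b / t) (-(b / t ^ 2)) (Ioi 0) t := by
    intro t ht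
    have h := ((hasDerivAt_inv (ne_of_gt ht)).const_mul b).hasDerivWithinAt (s := Ioi 0)
    exact h.congr_deriv (by ring)
  have hinj2 : InjOn (fun t : ℝ => b / t) (Ioi 0) := by
    intro t1 h1 t2 h2 h
    simp only [mem_Ioi] at h1 h2
    field_simp at h
    linarith
  have hJ2 : ∫ t in Ioi (0 : ℝ), Real.exp (-(t - b / t) ^ 2)
      = ∫ t in Ioi (0 : ℝ), (b / t ^ 2) * Real.exp (-(t - b / t) ^ 2) := by
    have := integral_image_eq_integral_abs_deriv_smul measurableSet_Ioi hderiv2 hinj2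
      (fun u => Real.exp (-(u - b / u) ^ 2))
    rw [inv_image hb] at this
    rw [this]
    apply setIntegral_congr_fun measurableSet_Ioi
    intro t ht
    simp only [mem_Ioi] at ht
    have h1 : b / (b / t) = t := by field_simp
    have h2 : (b / t - t) ^ 2 = (t - b / t) ^ 2 := by ring
    simp only [smul_eq_mul]
    rw [h1, h2, abs_neg, abs_of_nonneg (by positivity : (0:ℝ) ≤ b / t ^ 2)]
  have h2int : IntegrableOn (fun t : ℝ => (b / t ^ 2) * Real.exp (-(t - b / t) ^ 2)) (Ioi 0) := by
    have hderiv2' := hderiv2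
    have := (integrableOn_image_iff_integrableOn_abs_deriv_smul measurableSet_Ioi hderiv2 hinj2
      (fun u => Real.exp (-(u - b / u) ^ 2))).mp (by rw [inv_image hb]; exact glasser_integrable hb)
    apply this.congr_fun ?_ measurableSet_Ioi
    intro t ht
    simp only [mem_Ioi] at ht
    have h1 : b / (b / t) = t := by field_simp
    have h2 : (b / t - t) ^ 2 = (t - b / t) ^ 2 := by ring
    simp only [smul_eq_mul]
    rw [h1, h2, abs_neg, abs_of_nonneg (by positivity : (0:ℝ) ≤ b / t ^ 2)]
  have hderiv1 : ∀ t ∈ Ioi (0 : ℝ),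
      HasDerivWithinAt (fun t : ℝ => t - b / t) (1 + b / t ^ 2) (Ioi 0) t := by
    intro t ht
    have h := ((hasDerivAt_id t).sub
      ((hasDerivAt_inv (ne_of_gt ht)).const_mul b)).hasDerivWithinAt (s := Ioi 0)
    exact h.congr_deriv (by ring)
  have hinj1 : InjOn (fun t : ℝ => t - b / t) (Ioi 0) := by
    apply StrictMonoOn.injOn
    intro t1 h1 t2 h2 h12
    simp only [mem_Ioi] at h1 h2
    have : b / t2 < b / t1 := div_lt_div_of_pos_left hb h1 h12
    simp only
    linarith
  have key : Real.sqrt Real.pi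
      = ∫ t in Ioi (0 : ℝ), (1 + b / t ^ 2) * Real.exp (-(t - b / t) ^ 2) := by
    have him := integral_image_eq_integral_abs_deriv_smul measurableSet_Ioi hderiv1 hinj1
      (fun u => Real.exp (-u ^ 2))
    rw [sub_image hb] at him
    have hg : ∫ u in (univ : Set ℝ), Real.exp (-u ^ 2) = Real.sqrt Real.pi := by
      rw [Measure.restrict_univ]
      have := integral_gaussian 1
      simpa using this
    rw [← hg, him]
    apply setIntegral_congr_fun measurableSet_Ioi
    intro t ht
    simp only [mem_Ioi] at ht
    simp only [smul_eq_mul]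
    rw [abs_of_nonneg (by positivity : (0:ℝ) ≤ 1 + b / t ^ 2)]
  have hsplit : ∫ t in Ioi (0 : ℝ), (1 + b / t ^ 2) * Real.exp (-(t - b / t) ^ 2)
      = (∫ t in Ioi (0 : ℝ), Real.exp (-(t - b / t) ^ 2))
        + ∫ t in Ioi (0 : ℝ), (b / t ^ 2) * Real.exp (-(t - b / t) ^ 2) := by
    rw [← integral_add (glasser_integrable hb) h2int]
    congr 1
    ext t
    ring
  rw [hsplit, ← hJ2] at key
  linarith [key]

lemma glasser {b : ℝ} (hb : 0 ≤ b) :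
    ∫ t in Ioi (0 : ℝ), Real.exp (-(t ^ 2 + b ^ 2 / t ^ 2))
      = Real.sqrt Real.pi / 2 * Real.exp (-(2 * b)) := by
  rcases eq_or_lt_of_le hb with rfl | hb
  · have h := integral_gaussian_Ioi 1
    simp only [div_one] at h
    rw [show (2:ℝ) * 0 = 0 by ring, neg_zero, Real.exp_zero, mul_one, ← h]
    apply setIntegral_congr_fun measurableSet_Ioi
    intro t ht
    norm_num
  · have hcong : EqOn (fun t : ℝ => Real.exp (-(t ^ 2 + b ^ 2 / t ^ 2)))
        (fun t => Real.exp (-(2 * b)) * Real.exp (-(t - b / t) ^ 2)) (Ioi 0) := by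
      intro t ht
      simp only [mem_Ioi] at ht
      dsimp only
      rw [← Real.exp_add]
      congr 1
      have h1 : (t - b / t) ^ 2 = t ^ 2 - 2 * b + b ^ 2 / t ^ 2 := by
        field_simp
        ring
      rw [h1]
      ring
    rw [setIntegral_congr_fun measurableSet_Ioi hcong, integral_const_mul, glasser_half hb]
    ring

theorem stmt4 (x : ℝ) :
    ∫ y in Set.Ioi (0 : ℝ),
        (1 / (2 * Real.sqrt (Real.pi * y))) * Real.exp (-x ^ 2 / (4 * y)) * Real.exp (-y)
      = (1 / 2) * Real.exp (-|x|) := by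
  have hderiv : ∀ t ∈ Ioi (0 : ℝ), HasDerivWithinAt (fun t : ℝ => t ^ 2) (2 * t) (Ioi 0) t := by
    intro t ht
    simpa using (hasDerivAt_pow 2 t).hasDerivWithinAt (s := Ioi 0)
  have hinj : InjOn (fun t : ℝ => t ^ 2) (Ioi 0) := by
    intro a ha b hb h
    simp only [mem_Ioi] at ha hb
    simp only at h
    calc a = Real.sqrt (a ^ 2) := (Real.sqrt_sq ha.le).symm
    _ = Real.sqrt (b ^ 2) := by rw [h]
    _ = b := Real.sqrt_sq hb.le
  have him := integral_image_eq_integral_abs_deriv_smul measurableSet_Ioi hderiv hinj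
    (fun y => (1 / (2 * Real.sqrt (Real.pi * y))) * Real.exp (-x ^ 2 / (4 * y)) * Real.exp (-y))
  rw [sq_image] at him
  rw [him]
  have hcong : EqOn
      (fun t : ℝ => |2 * t| • ((1 / (2 * Real.sqrt (Real.pi * t ^ 2)))
        * Real.exp (-x ^ 2 / (4 * t ^ 2)) * Real.exp (-t ^ 2)))
      (fun t => (1 / Real.sqrt Real.pi)
        * Real.exp (-(t ^ 2 + (|x| / 2) ^ 2 / t ^ 2))) (Ioi 0) := by
    intro t ht
    simp only [mem_Ioi] at ht
    simp only [smul_eq_mul]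
    rw [abs_of_nonneg (by positivity : (0:ℝ) ≤ 2 * t),
      Real.sqrt_mul Real.pi_pos.le, Real.sqrt_sq ht.le,
      show -(t ^ 2 + (|x| / 2) ^ 2 / t ^ 2) = -x ^ 2 / (4 * t ^ 2) + -t ^ 2 by
        rw [div_pow, sq_abs]; field_simp; ring,
      Real.exp_add]
    have hpi : Real.sqrt Real.pi ≠ 0 := by positivity
    field_simp
  rw [setIntegral_congr_fun measurableSet_Ioi hcong, integral_const_mul,
    glasser (by positivity : (0:ℝ) ≤ |x| / 2),
    show 2 * (|x| / 2) = |x| by ring]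
  have hpi : Real.sqrt Real.pi ≠ 0 := by positivity
  field_simp
end

section
/- For every subspace H of ℝ^n, the function (t_1,...,t_n) ↦ vol_H(diag(e^{t_1},...,e^{t_n}) B_2^n ∩ H) is log-concave on ℝ^n, where B_2^n is the Euclidean unit ball. -/
open MeasureTheory

section Aux

open Matrix Finset ENNReal
open scoped MatrixOrder

private theorem expandCB {d n : ℕ} (A : Matrix (Fin n) (Fin d) ℝ) :
    det (Aᵀ * A) = ∑ f : Fin d → Fin n, (∏ j, A (f j) j) * det (A.submatrix f id) := by
  have hM : Aᵀ * A = Matrix.of fun j => ∑ i, A i j • (fun k' => A i k') := by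
    ext j k
    simp [Matrix.mul_apply, Finset.sum_apply]
  rw [hM]
  show (Matrix.detRowAlternating : (Fin d → ℝ) [⋀^Fin d]→ₗ[ℝ] ℝ).toMultilinearMap
      (fun j => ∑ i, A i j • (fun k' => A i k')) = _
  rw [MultilinearMap.map_sum]
  refine Finset.sum_congr rfl fun f _ => ?_
  rw [MultilinearMap.map_smul_univ]
  rfl

private theorem symCB {d n : ℕ} (A : Matrix (Fin n) (Fin d) ℝ) :
    (Nat.factorial d : ℝ) * det (Aᵀ * A)
      = ∑ f : Fin d → Fin n, (det (A.submatrix f id))^2 := by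
  have step : ∀ σ : Equiv.Perm (Fin d),
      (∑ h : Fin d → Fin n, det (A.submatrix h id) * ∏ j, A (h j) j)
      = ∑ f : Fin d → Fin n,
          ((Equiv.Perm.sign σ : ℤ) : ℝ) * det (A.submatrix f id) * ∏ j, A (f (σ j)) j := by
    intro σ
    refine Fintype.sum_equiv (σ.arrowCongr (Equiv.refl (Fin n))) _ _ fun h => ?_
    have h1 : A.submatrix (h ∘ ⇑σ⁻¹) id = (A.submatrix h id).submatrix (⇑σ⁻¹) id := by
      simp [Matrix.submatrix_submatrix]
    have h2 : ((A.submatrix h id).submatrix (⇑σ⁻¹) id).det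
        = ((Equiv.Perm.sign σ⁻¹ : ℤ) : ℝ) * (A.submatrix h id).det :=
      Matrix.det_permute σ⁻¹ _
    have hsign : (((Equiv.Perm.sign σ : ℤ) : ℝ)) * ((Equiv.Perm.sign σ⁻¹ : ℤ) : ℝ) = 1 := by
      rw [Equiv.Perm.sign_inv]
      rcases Int.units_eq_one_or (Equiv.Perm.sign σ) with h | h <;> simp [h]
    calc det (A.submatrix h id) * ∏ j, A (h j) j
        = (((Equiv.Perm.sign σ : ℤ) : ℝ) * ((Equiv.Perm.sign σ⁻¹ : ℤ) : ℝ)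
            * det (A.submatrix h id)) * ∏ j, A (h j) j := by rw [hsign, one_mul]
      _ = ((Equiv.Perm.sign σ : ℤ) : ℝ)
            * det (A.submatrix ((σ.arrowCongr (Equiv.refl (Fin n))) h) id)
            * ∏ j, A (((σ.arrowCongr (Equiv.refl (Fin n))) h) (σ j)) j := by
          have heq : (σ.arrowCongr (Equiv.refl (Fin n))) h = h ∘ ⇑σ⁻¹ := by
            funext j; simp [Equiv.arrowCongr_apply, Equiv.Perm.inv_def]
          rw [heq, h1, h2]
          simp only [Function.comp_apply, Equiv.Perm.inv_def, Equiv.symm_apply_apply]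
          ring
  have rhs : ∑ f : Fin d → Fin n, (det (A.submatrix f id))^2
      = ∑ σ : Equiv.Perm (Fin d), ∑ f : Fin d → Fin n,
          ((Equiv.Perm.sign σ : ℤ) : ℝ) * det (A.submatrix f id) * ∏ j, A (f (σ j)) j := by
    rw [Finset.sum_comm]
    refine Finset.sum_congr rfl fun f _ => ?_
    rw [pow_two]
    nth_rewrite 2 [Matrix.det_apply']
    rw [Finset.mul_sum]
    refine Finset.sum_congr rfl fun σ _ => ?_
    simp [Matrix.submatrix_apply]
    ring
  rw [rhs]
  have : ∀ σ : Equiv.Perm (Fin d), (∑ f : Fin d → Fin n,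
      ((Equiv.Perm.sign σ : ℤ) : ℝ) * det (A.submatrix f id) * ∏ j, A (f (σ j)) j)
      = det (Aᵀ * A) := by
    intro σ
    rw [← step σ, expandCB]
    exact Finset.sum_congr rfl fun f _ => mul_comm _ _
  rw [Finset.sum_congr rfl fun σ _ => this σ, Finset.sum_const, Finset.card_univ,
    Fintype.card_perm, nsmul_eq_mul, Fintype.card_fin]

private theorem hoelder_sum {ι : Type*} [Fintype ι] (a b : ι → ℝ) (ha : ∀ i, 0 ≤ a i)
    (hb : ∀ i, 0 ≤ b i) {l : ℝ} (hl0 : 0 < l) (hl1 : l < 1)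
    (hA : 0 < ∑ i, a i) (hB : 0 < ∑ i, b i) :
    ∑ i, a i ^ l * b i ^ (1 - l) ≤ (∑ i, a i) ^ l * (∑ i, b i) ^ (1 - l) := by
  set A := ∑ i, a i with hAdef
  set B := ∑ i, b i with hBdef
  have hApos : (0:ℝ) < A := hA
  have hBpos : (0:ℝ) < B := hB
  have key : ∀ i, a i ^ l * b i ^ (1 - l)
      ≤ A ^ l * B ^ (1 - l) * (l * (a i / A) + (1 - l) * (b i / B)) := by
    intro i
    have h1 : a i ^ l = A ^ l * (a i / A) ^ l := by
      rw [← Real.mul_rpow hApos.le (div_nonneg (ha i) hApos.le)]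
      rw [mul_div_cancel₀ _ hApos.ne']
    have h2 : b i ^ (1 - l) = B ^ (1 - l) * (b i / B) ^ (1 - l) := by
      rw [← Real.mul_rpow hBpos.le (div_nonneg (hb i) hBpos.le)]
      rw [mul_div_cancel₀ _ hBpos.ne']
    rw [h1, h2]
    have hg := Real.geom_mean_le_arith_mean2_weighted hl0.le (by linarith : (0:ℝ) ≤ 1 - l)
      (div_nonneg (ha i) hApos.le) (div_nonneg (hb i) hBpos.le) (by ring)
    calc A ^ l * (a i / A) ^ l * (B ^ (1 - l) * (b i / B) ^ (1 - l))
        = A ^ l * B ^ (1 - l) * ((a i / A) ^ l * (b i / B) ^ (1 - l)) := by ring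
      _ ≤ A ^ l * B ^ (1 - l) * (l * (a i / A) + (1 - l) * (b i / B)) := by
          refine mul_le_mul_of_nonneg_left hg (by positivity)
  calc ∑ i, a i ^ l * b i ^ (1 - l)
      ≤ ∑ i, A ^ l * B ^ (1 - l) * (l * (a i / A) + (1 - l) * (b i / B)) :=
        Finset.sum_le_sum fun i _ => key i
    _ = A ^ l * B ^ (1 - l) * (l * (A / A) + (1 - l) * (B / B)) := by
        rw [← Finset.mul_sum]
        congr 1
        rw [Finset.sum_add_distrib, ← Finset.mul_sum, ← Finset.mul_sum,
          ← Finset.sum_div, ← Finset.sum_div]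
    _ = A ^ l * B ^ (1 - l) := by
        rw [div_self hApos.ne', div_self hBpos.ne']
        ring

private theorem rpow_self_helper {c : ℝ} (hc : 0 ≤ c) {l : ℝ} (hl0 : 0 < l) (hl1 : l < 1) :
    c ^ l * c ^ (1 - l) = c := by
  rcases eq_or_lt_of_le hc with h | h
  · rw [← h, Real.zero_rpow hl0.ne', zero_mul]
  · rw [← Real.rpow_add h, add_sub_cancel, Real.rpow_one]

private theorem final_real {Ks Kt Ku Vr fact : ℝ} (hKs : 0 < Ks) (hKt : 0 < Kt)
    (hKu : 0 < Ku) (hVr : 0 ≤ Vr) (hfact : 0 < fact) {l : ℝ} (hl0 : 0 < l) (hl1 : l < 1)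
    (hG : fact * Ku ≤ (fact * Ks) ^ l * (fact * Kt) ^ (1 - l)) :
    (Vr / Real.sqrt Ks) ^ l * (Vr / Real.sqrt Kt) ^ (1 - l) ≤ Vr / Real.sqrt Ku := by
  have h1 : Ku ≤ Ks ^ l * Kt ^ (1 - l) := by
    have hf : fact ^ l * fact ^ (1 - l) = fact := rpow_self_helper hfact.le hl0 hl1
    rw [Real.mul_rpow hfact.le hKs.le, Real.mul_rpow hfact.le hKt.le] at hG
    have h2 : fact * Ku ≤ fact * (Ks ^ l * Kt ^ (1 - l)) := by
      calc fact * Ku ≤ fact ^ l * Ks ^ l * (fact ^ (1 - l) * Kt ^ (1 - l)) := hG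
        _ = (fact ^ l * fact ^ (1 - l)) * (Ks ^ l * Kt ^ (1 - l)) := by ring
        _ = fact * (Ks ^ l * Kt ^ (1 - l)) := by rw [hf]
    exact le_of_mul_le_mul_left h2 hfact
  have hsKs : 0 < Real.sqrt Ks := Real.sqrt_pos.mpr hKs
  have hsKt : 0 < Real.sqrt Kt := Real.sqrt_pos.mpr hKt
  have hsKu : 0 < Real.sqrt Ku := Real.sqrt_pos.mpr hKu
  have h3 : Real.sqrt (Ks ^ l * Kt ^ (1 - l))
      = Real.sqrt Ks ^ l * Real.sqrt Kt ^ (1 - l) := by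
    rw [Real.sqrt_eq_rpow, Real.sqrt_eq_rpow, Real.sqrt_eq_rpow,
      Real.mul_rpow (Real.rpow_nonneg hKs.le l) (Real.rpow_nonneg hKt.le _),
      ← Real.rpow_mul hKs.le, ← Real.rpow_mul hKt.le,
      ← Real.rpow_mul hKs.le, ← Real.rpow_mul hKt.le, mul_comm l (1 / 2),
      mul_comm (1 - l) (1 / 2)]
  have hsq : Real.sqrt Ku ≤ Real.sqrt Ks ^ l * Real.sqrt Kt ^ (1 - l) := by
    rw [← h3]
    exact Real.sqrt_le_sqrt h1
  have hlhs : (Vr / Real.sqrt Ks) ^ l * (Vr / Real.sqrt Kt) ^ (1 - l)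
      = Vr / (Real.sqrt Ks ^ l * Real.sqrt Kt ^ (1 - l)) := by
    rw [Real.div_rpow hVr hsKs.le, Real.div_rpow hVr hsKt.le, div_mul_div_comm,
      rpow_self_helper hVr hl0 hl1]
  rw [hlhs]
  exact div_le_div_of_nonneg_left hVr hsKu hsq

private theorem main_aux {d n : ℕ}
    (φ : EuclideanSpace ℝ (Fin d) →ₗᵢ[ℝ] EuclideanSpace ℝ (Fin n))
    (s t : Fin n → ℝ) {l : ℝ} (hl0 : 0 < l) (hl1 : l < 1) :
    (μH[(d:ℝ)] ({x : EuclideanSpace ℝ (Fin n) | ∑ i, (Real.exp (-s i) * x i) ^ 2 ≤ 1}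
        ∩ Set.range φ)).toReal ^ l
      * (μH[(d:ℝ)] ({x : EuclideanSpace ℝ (Fin n) | ∑ i, (Real.exp (-t i) * x i) ^ 2 ≤ 1}
        ∩ Set.range φ)).toReal ^ (1 - l)
    ≤ (μH[(d:ℝ)] ({x : EuclideanSpace ℝ (Fin n) |
          ∑ i, (Real.exp (-(l • s + (1 - l) • t) i) * x i) ^ 2 ≤ 1}
        ∩ Set.range φ)).toReal := by
  classical
  haveI : (μH[(d:ℝ)] : Measure (EuclideanSpace ℝ (Fin d))).IsAddHaarMeasure := by
    have h := MeasureTheory.isAddHaarMeasure_hausdorffMeasure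
      (E := EuclideanSpace ℝ (Fin d))
    simpa [finrank_euclideanSpace_fin] using h
  set μ : Measure (EuclideanSpace ℝ (Fin d)) := μH[(d:ℝ)] with hμ
  set V : ℝ≥0∞ := μ (Metric.closedBall (0 : EuclideanSpace ℝ (Fin d)) 1) with hV
  have hVlt : V < ⊤ := measure_closedBall_lt_top
  set Vr : ℝ := V.toReal with hVr
  have hVrnn : 0 ≤ Vr := ENNReal.toReal_nonneg
  -- the matrix of φ
  set B : Matrix (Fin n) (Fin d) ℝ :=
    LinearMap.toMatrix (EuclideanSpace.basisFun (Fin d) ℝ).toBasis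
      (EuclideanSpace.basisFun (Fin n) ℝ).toBasis φ.toLinearMap with hB
  have hmulvec : ∀ y : EuclideanSpace ℝ (Fin d), B *ᵥ (fun j => y j) = fun i => φ y i := by
    intro y
    have h := LinearMap.toMatrix_mulVec_repr
      (EuclideanSpace.basisFun (Fin d) ℝ).toBasis
      (EuclideanSpace.basisFun (Fin n) ℝ).toBasis φ.toLinearMap y
    have h1 : ⇑((EuclideanSpace.basisFun (Fin d) ℝ).toBasis.repr y) = fun j => y j := by
      funext j
      rw [OrthonormalBasis.coe_toBasis_repr_apply, EuclideanSpace.basisFun_repr]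
    rw [h1] at h
    rw [h]
    funext i
    rw [OrthonormalBasis.coe_toBasis_repr_apply, EuclideanSpace.basisFun_repr]
    rfl
  -- quadratic form computation
  have quad : ∀ (m : ℕ) (C : Matrix (Fin m) (Fin d) ℝ) (v : Fin d → ℝ),
      ∑ i, ((C *ᵥ v) i)^2 = v ⬝ᵥ ((Cᵀ * C) *ᵥ v) := by
    intro m C v
    have h1 : ∑ i, ((C *ᵥ v) i)^2 = (C *ᵥ v) ⬝ᵥ (C *ᵥ v) := by
      simp [dotProduct, pow_two]
    rw [h1, ← Matrix.mulVec_mulVec, Matrix.dotProduct_mulVec v Cᵀ, Matrix.vecMul_transpose]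
  -- main computation for a fixed parameter u
  have key : ∀ u : Fin n → ℝ,
      0 < det ((diagonal (fun i => Real.exp (-u i)) * B)ᵀ
          * (diagonal (fun i => Real.exp (-u i)) * B)) ∧
      (μH[(d:ℝ)] ({x : EuclideanSpace ℝ (Fin n) | ∑ i, (Real.exp (-u i) * x i) ^ 2 ≤ 1}
          ∩ Set.range φ)).toReal
        = Vr / Real.sqrt (det ((diagonal (fun i => Real.exp (-u i)) * B)ᵀ
            * (diagonal (fun i => Real.exp (-u i)) * B))) := by
    intro u
    set D : Matrix (Fin n) (Fin n) ℝ := diagonal (fun i => Real.exp (-u i)) with hD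
    set A : Matrix (Fin n) (Fin d) ℝ := D * B with hA
    set M : Matrix (Fin d) (Fin d) ℝ := Aᵀ * A with hM
    have hAv : ∀ y : EuclideanSpace ℝ (Fin d),
        A *ᵥ (fun j => y j) = fun i => Real.exp (-u i) * φ y i := by
      intro y
      rw [hA, ← Matrix.mulVec_mulVec, hmulvec y]
      funext i
      simp [hD, Matrix.mulVec_diagonal]
    -- positive definiteness
    have hMpos : M.PosDef := by
      refine Matrix.posDef_iff_dotProduct_mulVec.mpr ⟨?_, ?_⟩
      · have h := Matrix.isHermitian_conjTranspose_mul_self A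
        rwa [Matrix.conjTranspose_eq_transpose_of_trivial] at h
      · intro x hx
        have hsum : star x ⬝ᵥ (M *ᵥ x) = ∑ i, ((A *ᵥ x) i)^2 := by
          rw [quad n A x, star_trivial]
        rw [hsum]
        have hAx : A *ᵥ x ≠ 0 := by
          intro hzero
          apply hx
          set y : EuclideanSpace ℝ (Fin d) := (WithLp.equiv 2 (Fin d → ℝ)).symm x with hy
          have hφx : A *ᵥ x = fun i => Real.exp (-u i) * φ y i := hAv y
          rw [hφx] at hzero
          have hφ0 : φ y = 0 := by
            ext i
            have hi : Real.exp (-u i) * φ y i = 0 := congrFun hzero i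
            have := (mul_eq_zero.mp hi).resolve_left (Real.exp_ne_zero _)
            simpa using this
          have hy0 : y = 0 := φ.injective (by rw [hφ0, map_zero])
          have := congrArg (⇑(WithLp.equiv 2 (Fin d → ℝ))) hy0
          rw [hy] at this
          simpa using this
        have hnn : ∀ i, 0 ≤ ((A *ᵥ x) i)^2 := fun i => sq_nonneg _
        have hpos : ∃ i, 0 < ((A *ᵥ x) i)^2 := by
          by_contra hcon
          push_neg at hcon
          apply hAx
          funext i
          have h0 := le_antisymm (hcon i) (hnn i)
          have := pow_eq_zero_iff (n := 2) (by norm_num) |>.mp h0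
          simpa using this
        obtain ⟨i0, hi0⟩ := hpos
        exact Finset.sum_pos' (fun i _ => hnn i) ⟨i0, Finset.mem_univ i0, hi0⟩
    have hdetM : 0 < det M := hMpos.det_pos
    refine ⟨hdetM, ?_⟩
    -- square root
    set S : Matrix (Fin d) (Fin d) ℝ := CFC.sqrt M with hSdef
    have hSS : S * S = M := CFC.sqrt_mul_sqrt_self M hMpos.posSemidef.nonneg
    have hSherm : Sᵀ = S := by
      have h := (CFC.sqrt_nonneg M).posSemidef.1
      rwa [Matrix.IsHermitian, Matrix.conjTranspose_eq_transpose_of_trivial] at h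
    have hdetSS : det S * det S = det M := by rw [← Matrix.det_mul, hSS]
    have hdetSne : det S ≠ 0 := by
      intro h
      rw [h, mul_zero] at hdetSS
      exact hdetM.ne hdetSS
    have habsS : |det S| = Real.sqrt (det M) := by
      rw [← hdetSS, ← pow_two, Real.sqrt_sq_eq_abs]
    -- the set equality
    have hpre : ⇑φ ⁻¹' {x : EuclideanSpace ℝ (Fin n) | ∑ i, (Real.exp (-u i) * x i) ^ 2 ≤ 1}
        = ⇑(Matrix.toEuclideanLin S) ⁻¹'
            (Metric.closedBall (0 : EuclideanSpace ℝ (Fin d)) 1) := by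
      ext y
      simp only [Set.mem_preimage, Set.mem_setOf_eq, Metric.mem_closedBall, dist_zero_right]
      have hLHS : ∑ i, (Real.exp (-u i) * φ y i) ^ 2
          = (fun j => y j) ⬝ᵥ (M *ᵥ (fun j => y j)) := by
        rw [← quad n A]
        rw [hAv y]
      have hRHS : ‖Matrix.toEuclideanLin S y‖^2
          = (fun j => y j) ⬝ᵥ (M *ᵥ (fun j => y j)) := by
        have h1 : ‖Matrix.toEuclideanLin S y‖^2
            = ∑ i, ((S *ᵥ (fun j => y j)) i)^2 := by
          rw [EuclideanSpace.norm_eq, Real.sq_sqrt (by positivity)]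
          refine Finset.sum_congr rfl fun i _ => ?_
          rw [Real.norm_eq_abs, sq_abs]
          rfl
        rw [h1, quad d S, hSherm, hSS]
      constructor
      · intro h
        have h2 : ‖Matrix.toEuclideanLin S y‖^2 ≤ 1 := by
          rw [hRHS, ← hLHS]; exact h
        nlinarith [norm_nonneg (Matrix.toEuclideanLin S y)]
      · intro h
        have h2 : ‖Matrix.toEuclideanLin S y‖^2 ≤ 1 := by
          nlinarith [norm_nonneg (Matrix.toEuclideanLin S y)]
        rw [hRHS] at h2
        rw [hLHS]
        exact h2
    have hset : {x : EuclideanSpace ℝ (Fin n) | ∑ i, (Real.exp (-u i) * x i) ^ 2 ≤ 1}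
          ∩ Set.range φ
        = ⇑φ '' (⇑(Matrix.toEuclideanLin S) ⁻¹'
            (Metric.closedBall (0 : EuclideanSpace ℝ (Fin d)) 1)) := by
      rw [← Set.image_preimage_eq_inter_range, hpre]
    -- preimage = image of inverse
    have hunit : IsUnit S.det := hdetSne.isUnit
    have hleft : Function.LeftInverse ⇑(Matrix.toEuclideanLin S⁻¹) ⇑(Matrix.toEuclideanLin S) := by
      intro y
      have h : Matrix.toEuclideanLin S⁻¹ (Matrix.toEuclideanLin S y)
          = Matrix.toEuclideanLin (S⁻¹ * S) y := by
        simp [Matrix.toEuclideanLin_apply, Matrix.mulVec_mulVec]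
      rw [h, Matrix.nonsing_inv_mul S hunit]
      simp [Matrix.toEuclideanLin_apply]
    have hright : Function.RightInverse ⇑(Matrix.toEuclideanLin S⁻¹) ⇑(Matrix.toEuclideanLin S) := by
      intro y
      have h : Matrix.toEuclideanLin S (Matrix.toEuclideanLin S⁻¹ y)
          = Matrix.toEuclideanLin (S * S⁻¹) y := by
        simp [Matrix.toEuclideanLin_apply, Matrix.mulVec_mulVec]
      rw [h, Matrix.mul_nonsing_inv S hunit]
      simp [Matrix.toEuclideanLin_apply]
    have hpreim : ⇑(Matrix.toEuclideanLin S) ⁻¹'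
          (Metric.closedBall (0 : EuclideanSpace ℝ (Fin d)) 1)
        = ⇑(Matrix.toEuclideanLin S⁻¹) ''
          (Metric.closedBall (0 : EuclideanSpace ℝ (Fin d)) 1) := by
      have h := Set.image_eq_preimage_of_inverse
        (f := ⇑(Matrix.toEuclideanLin S⁻¹)) (g := ⇑(Matrix.toEuclideanLin S)) hright hleft
      exact (congrFun h (Metric.closedBall (0 : EuclideanSpace ℝ (Fin d)) 1)).symm
    -- measure computation
    have hdetLin : LinearMap.det (Matrix.toEuclideanLin S⁻¹) = S⁻¹.det := by
      rw [Matrix.toEuclideanLin_eq_toLin, LinearMap.det_toLin]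
    have hmeas : μH[(d:ℝ)] ({x : EuclideanSpace ℝ (Fin n) |
          ∑ i, (Real.exp (-u i) * x i) ^ 2 ≤ 1} ∩ Set.range φ)
        = ENNReal.ofReal |S⁻¹.det| * V := by
      rw [hset, φ.isometry.hausdorffMeasure_image (Or.inl (by positivity)), hpreim]
      rw [← hdetLin, hV, hμ]
      exact Measure.addHaar_image_linearMap (μH[(d:ℝ)]) (Matrix.toEuclideanLin S⁻¹) _
    rw [hmeas, ENNReal.toReal_mul, ENNReal.toReal_ofReal (abs_nonneg _),
      Matrix.det_nonsing_inv, Ring.inverse_eq_inv, abs_inv, habsS, ← hVr, inv_mul_eq_div]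
  -- coefficients and exponential parts
  set c : (Fin d → Fin n) → ℝ := fun g => (det (B.submatrix g id))^2 with hc
  set e : (Fin n → ℝ) → (Fin d → Fin n) → ℝ :=
    fun u g => Real.exp (2 * ∑ j, (-u (g j))) with he
  -- G expansion
  have hGu : ∀ u : Fin n → ℝ,
      (Nat.factorial d : ℝ) * det ((diagonal (fun i => Real.exp (-u i)) * B)ᵀ
          * (diagonal (fun i => Real.exp (-u i)) * B))
        = ∑ g : Fin d → Fin n, e u g * c g := by
    intro u
    rw [symCB]
    refine Finset.sum_congr rfl fun g _ => ?_
    have hsub : (diagonal (fun i => Real.exp (-u i)) * B).submatrix g id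
        = diagonal (fun j => Real.exp (-u (g j))) * (B.submatrix g id) := by
      ext j k
      simp [Matrix.submatrix_apply, Matrix.diagonal_mul]
    rw [hsub, Matrix.det_mul, Matrix.det_diagonal, mul_pow]
    congr 1
    rw [← Real.exp_sum, he]
    show Real.exp (∑ j, -u (g j)) ^ 2 = Real.exp (2 * ∑ j, -u (g j))
    rw [two_mul, Real.exp_add, pow_two]
  have hepos : ∀ u g, 0 < e u g := fun u g => Real.exp_pos _
  have hcnn : ∀ g, 0 ≤ c g := fun g => sq_nonneg _
  -- the exponential combination identity
  have hcomb : ∀ g, e (l • s + (1 - l) • t) g = (e s g) ^ l * (e t g) ^ (1 - l) := by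
    intro g
    rw [he]
    simp only
    rw [← Real.exp_mul, ← Real.exp_mul, ← Real.exp_add]
    congr 1
    have hsum : ∑ j, -((l • s + (1 - l) • t) (g j))
        = l * (∑ j, -s (g j)) + (1 - l) * (∑ j, -t (g j)) := by
      rw [Finset.mul_sum, Finset.mul_sum, ← Finset.sum_add_distrib]
      refine Finset.sum_congr rfl fun j _ => ?_
      simp only [Pi.add_apply, Pi.smul_apply, smul_eq_mul]
      ring
    rw [hsum]
    ring
  -- apply Hoelder
  have hpos_s : 0 < ∑ g : Fin d → Fin n, e s g * c g := by
    rw [← hGu s]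
    have := (key s).1
    positivity
  have hpos_t : 0 < ∑ g : Fin d → Fin n, e t g * c g := by
    rw [← hGu t]
    have := (key t).1
    positivity
  have hH := hoelder_sum (fun g => e s g * c g) (fun g => e t g * c g)
    (fun g => mul_nonneg (hepos s g).le (hcnn g))
    (fun g => mul_nonneg (hepos t g).le (hcnn g)) hl0 hl1 hpos_s hpos_t
  have hLHSsum : ∑ g : Fin d → Fin n, (e s g * c g) ^ l * (e t g * c g) ^ (1 - l)
      = ∑ g : Fin d → Fin n, e (l • s + (1 - l) • t) g * c g := by
    refine Finset.sum_congr rfl fun g _ => ?_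
    rw [Real.mul_rpow (hepos s g).le (hcnn g), Real.mul_rpow (hepos t g).le (hcnn g),
      hcomb g]
    calc e s g ^ l * c g ^ l * (e t g ^ (1 - l) * c g ^ (1 - l))
        = (e s g ^ l * e t g ^ (1 - l)) * (c g ^ l * c g ^ (1 - l)) := by ring
      _ = e s g ^ l * e t g ^ (1 - l) * c g := by rw [rpow_self_helper (hcnn g) hl0 hl1]
  rw [hLHSsum] at hH
  have hfactpos : (0:ℝ) < (Nat.factorial d : ℝ) := by
    exact_mod_cast Nat.factorial_pos d
  obtain ⟨hKs, hFs⟩ := key s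
  obtain ⟨hKt, hFt⟩ := key t
  obtain ⟨hKu, hFu⟩ := key (l • s + (1 - l) • t)
  rw [hFs, hFt, hFu]
  refine final_real hKs hKt hKu hVrnn hfactpos hl0 hl1 ?_
  rw [hGu s, hGu t, hGu (l • s + (1 - l) • t)]
  exact hH

end Aux

theorem stmt14 (n : ℕ) (H : Submodule ℝ (EuclideanSpace ℝ (Fin n)))
    (f : (Fin n → ℝ) → ℝ)
    (hf : ∀ t, f t = (μH[((Module.finrank ℝ H : ℕ) : ℝ)]
        ({x : EuclideanSpace ℝ (Fin n) | ∑ i, (Real.exp (-t i) * x i) ^ 2 ≤ 1}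
          ∩ (H : Set (EuclideanSpace ℝ (Fin n))))).toReal) :
    ∀ s t : Fin n → ℝ, ∀ l : ℝ, 0 ≤ l → l ≤ 1 →
      f s ^ l * f t ^ (1 - l) ≤ f (l • s + (1 - l) • t) := by
  intro s t l hl0 hl1
  rcases eq_or_lt_of_le hl0 with h0 | h0
  · rw [← h0]
    norm_num
  rcases eq_or_lt_of_le hl1 with h1 | h1
  · rw [h1]
    norm_num
  have : FiniteDimensional ℝ (EuclideanSpace ℝ (Fin n)) := by infer_instance
  set φ : EuclideanSpace ℝ (Fin (Module.finrank ℝ H)) →ₗᵢ[ℝ] EuclideanSpace ℝ (Fin n) :=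
    H.subtypeₗᵢ.comp (stdOrthonormalBasis ℝ H).repr.symm.toLinearIsometry with hφ
  have hrange : Set.range ⇑φ = (H : Set (EuclideanSpace ℝ (Fin n))) := by
    have h1 : ⇑φ = (Subtype.val : H → EuclideanSpace ℝ (Fin n))
        ∘ ⇑((stdOrthonormalBasis ℝ H).repr.symm) := rfl
    rw [h1, Set.range_comp, ((stdOrthonormalBasis ℝ H).repr.symm).surjective.range_eq,
      Set.image_univ, Subtype.range_coe]
  have hfeq : ∀ u : Fin n → ℝ, f u
      = (μH[((Module.finrank ℝ H : ℕ) : ℝ)]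
          ({x : EuclideanSpace ℝ (Fin n) | ∑ i, (Real.exp (-u i) * x i) ^ 2 ≤ 1}
            ∩ Set.range ⇑φ)).toReal := by
    intro u
    rw [hf u, hrange]
  rw [hfeq s, hfeq t, hfeq (l • s + (1 - l) • t)]
  exact main_aux φ s t h0 h1
end

section
/- Let K be the parallelogram in ℝ² with vertices (−1,−2), (−1,−1), (1,1), (1,2), let μ be the uniform probability measure on K, and f(t) = log μ(diag(1, e^t) K). Then f is not concave on ℝ. Specifically: f(0) = 0 = max f, lim_{t→−∞} f(t) = −∞, and lim_{t→+∞} f(t) > −∞. -/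
open MeasureTheory Filter Set

noncomputable def e2 : (Fin 2 → ℝ) → EuclideanSpace ℝ (Fin 2) :=
  (EuclideanSpace.equiv (Fin 2) ℝ).symm

lemma e2_apply (v : Fin 2 → ℝ) (i : Fin 2) : e2 v i = v i := rfl

lemma coord_add_smul (a b : ℝ) (p q : EuclideanSpace ℝ (Fin 2)) (i : Fin 2) :
    (a • p + b • q) i = a * p i + b * q i := rfl

def Kset : Set (EuclideanSpace ℝ (Fin 2)) :=
  {p | p 0 ∈ Icc (-1:ℝ) 1 ∧ 2 * p 1 - 3 * p 0 ∈ Icc (-1:ℝ) 1}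

lemma convex_Kset : Convex ℝ Kset := by
  intro p hp q hq a b ha hb hab
  obtain ⟨⟨h1,h2⟩,h3,h4⟩ := hp
  obtain ⟨⟨g1,g2⟩,g3,g4⟩ := hq
  refine ⟨⟨?_,?_⟩,?_,?_⟩ <;>
    simp only [coord_add_smul] <;> nlinarith

lemma K_eq_Kset :
    convexHull ℝ {e2 ![-1, -2], e2 ![-1, -1], e2 ![1, 1], e2 ![1, 2]} = Kset := by
  apply le_antisymm
  · apply convexHull_min _ convex_Kset
    rintro p hp
    simp only [mem_insert_iff, mem_singleton_iff] at hp
    rcases hp with rfl|rfl|rfl|rfl <;>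
      refine ⟨⟨?_,?_⟩,?_,?_⟩ <;> simp [e2_apply] <;> norm_num
  · intro p hp
    obtain ⟨⟨hx1, hx2⟩, hy1, hy2⟩ := hp
    set x := p 0 with hx
    set y := p 1 with hy
    set S : Set (EuclideanSpace ℝ (Fin 2)) :=
      {e2 ![-1, -2], e2 ![-1, -1], e2 ![1, 1], e2 ![1, 2]} with hS
    have hC := convex_convexHull ℝ S
    have h1 : e2 ![-1,-2] ∈ convexHull ℝ S := subset_convexHull _ _ (by simp [hS])
    have h2 : e2 ![-1,-1] ∈ convexHull ℝ S := subset_convexHull _ _ (by simp [hS])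
    have h3 : e2 ![1,1] ∈ convexHull ℝ S := subset_convexHull _ _ (by simp [hS])
    have h4 : e2 ![1,2] ∈ convexHull ℝ S := subset_convexHull _ _ (by simp [hS])
    set u := (x+1)/2 with hu
    set w := (2*y - 3*x + 1)/2 with hw
    have hu0 : (0:ℝ) ≤ 1 - u := by simp only [hu]; linarith
    have hu1 : (0:ℝ) ≤ u := by simp only [hu]; linarith
    have hw0 : (0:ℝ) ≤ 1 - w := by simp only [hw]; linarith
    have hw1 : (0:ℝ) ≤ w := by simp only [hw]; linarith
    have q1 := hC h1 h3 hu0 hu1 (by ring)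
    have q2 := hC h2 h4 hu0 hu1 (by ring)
    have q := hC q1 q2 hw0 hw1 (by ring)
    have hpq : p = (1-w) • ((1-u) • e2 ![-1,-2] + u • e2 ![1,1])
        + w • ((1-u) • e2 ![-1,-1] + u • e2 ![1,2]) := by
      ext i
      fin_cases i <;>
        simp only [coord_add_smul, e2_apply, Fin.mk_zero, Fin.mk_one, Matrix.cons_val_zero,
          Matrix.cons_val_one, Matrix.head_cons, hu, hw]
      · show x = _; field_simp; ring
      · show y = _; field_simp; ring
    rw [hpq]; exact q

def Ktset (t : ℝ) : Set (EuclideanSpace ℝ (Fin 2)) :=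
  {p | p 0 ∈ Icc (-1:ℝ) 1 ∧ 2 * (Real.exp (-t) * p 1) - 3 * p 0 ∈ Icc (-1:ℝ) 1}

lemma image_Kset (t : ℝ) :
    (fun x : EuclideanSpace ℝ (Fin 2) => e2 ![x 0, Real.exp t * x 1]) '' Kset = Ktset t := by
  ext p
  constructor
  · rintro ⟨q, ⟨hq1, hq2⟩, rfl⟩
    have h0 : (e2 ![q 0, Real.exp t * q 1]) 0 = q 0 := rfl
    have h1 : (e2 ![q 0, Real.exp t * q 1]) 1 = Real.exp t * q 1 := rfl
    simp only [Set.mem_setOf_eq]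
    refine ⟨h0 ▸ hq1, ?_⟩
    rw [h1, h0]
    have he : 2 * (Real.exp (-t) * (Real.exp t * q 1)) = 2 * q 1 := by
      rw [← mul_assoc (Real.exp (-t)), ← Real.exp_add, neg_add_cancel, Real.exp_zero, one_mul]
    rw [he]; exact hq2
  · rintro ⟨hp1, hp2⟩
    refine ⟨e2 ![p 0, Real.exp (-t) * p 1], ⟨hp1, hp2⟩, ?_⟩
    ext i
    fin_cases i
    · rfl
    · show Real.exp t * (Real.exp (-t) * p 1) = p 1
      rw [← mul_assoc, ← Real.exp_add, add_neg_cancel, Real.exp_zero, one_mul]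

def ebox (a b c d : ℝ) : Set (EuclideanSpace ℝ (Fin 2)) :=
  {p | p 0 ∈ Icc a b ∧ p 1 ∈ Icc c d}

lemma ebox_eq (a b c d : ℝ) : ebox a b c d =
    (MeasurableEquiv.toLp 2 (Fin 2 → ℝ)).symm ⁻¹' (univ.pi fun i => Icc (![a,c] i) (![b,d] i)) := by
  ext p
  simp only [Set.mem_preimage, Set.mem_univ_pi, Fin.forall_fin_two, ebox, Set.mem_setOf_eq]
  rfl

lemma measurableSet_ebox (a b c d : ℝ) : MeasurableSet (ebox a b c d) := by
  rw [ebox_eq]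
  exact (MeasurableEquiv.toLp 2 (Fin 2 → ℝ)).symm.measurable
    (MeasurableSet.univ_pi fun i => measurableSet_Icc)

lemma volume_ebox (a b c d : ℝ) :
    volume (ebox a b c d) = ENNReal.ofReal (b - a) * ENNReal.ofReal (d - c) := by
  rw [ebox_eq, (EuclideanSpace.volume_preserving_symm_measurableEquiv_toLp (Fin 2)).measure_preimage
    ((MeasurableSet.univ_pi fun i => measurableSet_Icc).nullMeasurableSet), volume_pi_pi]
  simp [Fin.prod_univ_two, Real.volume_Icc]

lemma interp {x y c1 c2 : ℝ} (h1 : c2 ≤ c1) (h2 : c1 ≤ 1)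
    (hA : -1 ≤ 2*(c2*y) - 3*x) (hA' : 2*(c2*y) - 3*x ≤ 1)
    (hB : -1 ≤ 2*y - 3*x) (hB' : 2*y - 3*x ≤ 1) :
    -1 ≤ 2*(c1*y) - 3*x ∧ 2*(c1*y) - 3*x ≤ 1 := by
  rcases eq_or_lt_of_le (le_trans h1 h2) with h | h
  · have hc1 : c1 = 1 := le_antisymm h2 (h ▸ h1)
    constructor <;> rw [hc1, one_mul] <;> linarith
  · constructor <;> nlinarith [mul_nonneg (by linarith : (0:ℝ) ≤ 1 - c1) (by linarith : (0:ℝ) ≤ 2*(c2*y) - 3*x + 1),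
      mul_nonneg (by linarith : (0:ℝ) ≤ c1 - c2) (by linarith : (0:ℝ) ≤ 2*y - 3*x + 1),
      mul_nonneg (by linarith : (0:ℝ) ≤ 1 - c1) (by linarith : (0:ℝ) ≤ 1 - (2*(c2*y) - 3*x)),
      mul_nonneg (by linarith : (0:ℝ) ≤ c1 - c2) (by linarith : (0:ℝ) ≤ 1 - (2*y - 3*x))]

lemma Ktset_anti {t1 t2 : ℝ} (h0 : 0 ≤ t1) (h12 : t1 ≤ t2) :
    Ktset t2 ∩ Kset ⊆ Ktset t1 ∩ Kset := by
  rintro p ⟨⟨hp1, hA, hA'⟩, hq1, hB, hB'⟩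
  have hc12 : Real.exp (-t2) ≤ Real.exp (-t1) := Real.exp_le_exp.2 (by linarith)
  have hc1 : Real.exp (-t1) ≤ 1 := Real.exp_le_one_iff.2 (by linarith)
  have := interp (x := p 0) (y := p 1) hc12 hc1 (by linarith) (by linarith) (by linarith) (by linarith)
  exact ⟨⟨hp1, this.1, this.2⟩, hq1, hB, hB'⟩
section Main
open Real in
theorem stmt15 (K : Set (EuclideanSpace ℝ (Fin 2)))
    (hK : K = convexHull ℝ
      {e2 ![-1, -2], e2 ![-1, -1], e2 ![1, 1], e2 ![1, 2]})
    (Kt : ℝ → Set (EuclideanSpace ℝ (Fin 2)))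
    (hKt : ∀ t, Kt t = (fun x : EuclideanSpace ℝ (Fin 2) =>
      e2 ![x 0, Real.exp t * x 1]) '' K)
    (f : ℝ → ℝ)
    (hf : ∀ t, f t = Real.log ((volume (Kt t ∩ K)).toReal / (volume K).toReal)) :
    f 0 = 0 ∧ (∀ t, f t ≤ 0) ∧
      Tendsto f atBot atBot ∧
      (∃ L : ℝ, Tendsto f atTop (nhds L)) ∧
      ¬ ConcaveOn ℝ Set.univ f := by
  have hKs : K = Kset := by rw [hK, K_eq_Kset]
  have hKts : ∀ t, Kt t = Ktset t := fun t => by rw [hKt t, hKs, image_Kset]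
  -- finiteness of volume of Kset
  have hKsub : Kset ⊆ ebox (-1) 1 (-2) 2 := by
    rintro p ⟨⟨h1, h2⟩, h3, h4⟩
    exact ⟨⟨h1, h2⟩, by constructor <;> linarith⟩
  have hfin : volume Kset ≠ ⊤ := by
    refine ne_top_of_le_ne_top ?_ (measure_mono hKsub)
    rw [volume_ebox]
    exact ENNReal.mul_ne_top ENNReal.ofReal_ne_top ENNReal.ofReal_ne_top
  set vK : ℝ := (volume Kset).toReal with hvK
  -- lower bound on volume of Kset
  have hbox1 : ebox (-(1/6)) (1/6) (-(1/4)) (1/4) ⊆ Kset := by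
    rintro p ⟨⟨h1, h2⟩, h3, h4⟩
    exact ⟨⟨by linarith, by linarith⟩, by linarith, by linarith⟩
  have hvol_box1 : volume (ebox (-(1/6)) (1/6) (-(1/4)) (1/4)) = ENNReal.ofReal (1/6) := by
    rw [volume_ebox, ← ENNReal.ofReal_mul (by norm_num)]
    norm_num
  have h16 : (1/6 : ℝ) ≤ vK := by
    have h : volume (ebox (-(1/6)) (1/6) (-(1/4)) (1/4)) ≤ volume Kset :=
      measure_mono hbox1
    rw [hvol_box1] at h
    calc (1/6 : ℝ) = (ENNReal.ofReal (1/6 : ℝ)).toReal := by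
          rw [ENNReal.toReal_ofReal (by norm_num)]
      _ ≤ vK := ENNReal.toReal_mono hfin h
  have hvKpos : (0:ℝ) < vK := by linarith
  set g : ℝ → ℝ := fun t => (volume (Ktset t ∩ Kset)).toReal with hg
  have hfin_t : ∀ t, volume (Ktset t ∩ Kset) ≠ ⊤ := fun t =>
    ne_top_of_le_ne_top hfin (measure_mono Set.inter_subset_right)
  have hg_le : ∀ t, g t ≤ vK := fun t =>
    ENNReal.toReal_mono hfin (measure_mono Set.inter_subset_right)
  have hfeq : ∀ t, f t = Real.log (g t / vK) := fun t => by rw [hf t, hKts t, hKs]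
  -- lower bound on g
  have hlow : ∀ t : ℝ, ENNReal.ofReal (min (Real.exp t) 1 / 6) ≤ volume (Ktset t ∩ Kset) := by
    intro t
    set m := min (Real.exp t) 1 with hm
    have hm0 : (0:ℝ) < m := lt_min (Real.exp_pos t) one_pos
    have hm1 : m ≤ 1 := min_le_right _ _
    have hme : m ≤ Real.exp t := min_le_left _ _
    have hkey : Real.exp (-t) * m ≤ 1 := by
      have h := mul_le_mul_of_nonneg_left hme (Real.exp_pos (-t)).le
      rwa [← Real.exp_add, neg_add_cancel, Real.exp_zero] at h
    have hsub : ebox (-(1/6)) (1/6) (-(m/4)) (m/4) ⊆ Ktset t ∩ Kset := by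
      rintro p ⟨⟨h1, h2⟩, h3, h4⟩
      have hep : (0:ℝ) < Real.exp (-t) := Real.exp_pos _
      have e1 : Real.exp (-t) * p 1 ≤ Real.exp (-t) * (m/4) :=
        mul_le_mul_of_nonneg_left h4 hep.le
      have e2' : Real.exp (-t) * (-(m/4)) ≤ Real.exp (-t) * p 1 :=
        mul_le_mul_of_nonneg_left h3 hep.le
      refine ⟨⟨⟨by linarith, by linarith⟩, ?_, ?_⟩,
        ⟨by linarith, by linarith⟩, ?_, ?_⟩ <;> nlinarith [hkey, e1, e2', h1, h2, hm1]
    calc ENNReal.ofReal (m / 6)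
        = volume (ebox (-(1/6)) (1/6) (-(m/4)) (m/4)) := by
          rw [volume_ebox, ← ENNReal.ofReal_mul (by norm_num)]
          congr 1; ring
      _ ≤ volume (Ktset t ∩ Kset) := measure_mono hsub
  have hgpos : ∀ t, 0 < g t := by
    intro t
    have hmpos : (0:ℝ) < min (Real.exp t) 1 / 6 := by
      have := lt_min (Real.exp_pos t) one_pos; positivity
    calc (0:ℝ) < min (Real.exp t) 1 / 6 := hmpos
      _ = (ENNReal.ofReal (min (Real.exp t) 1 / 6)).toReal := by
          rw [ENNReal.toReal_ofReal hmpos.le]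
      _ ≤ g t := ENNReal.toReal_mono (hfin_t t) (hlow t)
  -- claim 1 : f 0 = 0
  have hKt0 : Ktset 0 = Kset := by
    ext p
    simp [Ktset, Kset, Real.exp_zero]
  have claim1 : f 0 = 0 := by
    have hg0 : g 0 = vK := by simp only [hg]; rw [hKt0, Set.inter_self]
    rw [hfeq 0, hg0, div_self (ne_of_gt hvKpos), Real.log_one]
  -- claim 2
  have claim2 : ∀ t, f t ≤ 0 := by
    intro t
    rw [hfeq t]
    exact Real.log_nonpos (div_nonneg ENNReal.toReal_nonneg hvKpos.le)
      ((div_le_one hvKpos).2 (hg_le t))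
  -- claim 3 : atBot
  have hgub : ∀ t, g t ≤ 8 * Real.exp t := by
    intro t
    have hsub : Ktset t ∩ Kset ⊆ ebox (-1) 1 (-(2 * Real.exp t)) (2 * Real.exp t) := by
      rintro p ⟨⟨⟨h1, h2⟩, h3, h4⟩, _⟩
      have hh : Real.exp t * (Real.exp (-t) * p 1) = p 1 := by
        rw [← mul_assoc, ← Real.exp_add, add_neg_cancel, Real.exp_zero, one_mul]
      have h2a : Real.exp (-t) * p 1 ≤ 2 := by linarith
      have h2b : -2 ≤ Real.exp (-t) * p 1 := by linarith
      have e1 := mul_le_mul_of_nonneg_left h2a (Real.exp_pos t).le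
      have e2' := mul_le_mul_of_nonneg_left h2b (Real.exp_pos t).le
      rw [hh] at e1 e2'
      exact ⟨⟨h1, h2⟩, by linarith, by linarith⟩
    have h := measure_mono hsub (μ := volume)
    rw [volume_ebox] at h
    have h' : volume (Ktset t ∩ Kset) ≤ ENNReal.ofReal (8 * Real.exp t) := by
      refine le_trans h ?_
      rw [← ENNReal.ofReal_mul (by norm_num)]
      apply ENNReal.ofReal_le_ofReal
      nlinarith [Real.exp_pos t]
    calc g t ≤ (ENNReal.ofReal (8 * Real.exp t)).toReal :=
          ENNReal.toReal_mono ENNReal.ofReal_ne_top h'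
      _ = 8 * Real.exp t := ENNReal.toReal_ofReal (by positivity)
  have claim3 : Tendsto f atBot atBot := by
    refine tendsto_atBot_mono' atBot ?_
      (tendsto_atBot_add_const_right atBot (Real.log 8 - Real.log vK) tendsto_id)
    filter_upwards with t
    rw [hfeq t]
    have h2 : g t / vK ≤ 8 * Real.exp t / vK := by
      gcongr
      exact hgub t
    have h1 : Real.log (g t / vK) ≤ Real.log (8 * Real.exp t / vK) :=
      Real.log_le_log (div_pos (hgpos t) hvKpos) h2
    refine h1.trans (le_of_eq ?_)
    rw [Real.log_div (by positivity) (ne_of_gt hvKpos),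
      Real.log_mul (by norm_num) (Real.exp_ne_zero t), Real.log_exp]
    simp only [id_eq]
    ring
  -- claim 4 : atTop
  have hg16 : ∀ s : ℝ, 0 ≤ s → (1/6 : ℝ) ≤ g s := by
    intro s hs
    have h := hlow s
    rw [min_eq_right (Real.one_le_exp hs)] at h
    calc (1/6 : ℝ) = (ENNReal.ofReal (1/6 : ℝ)).toReal := by
          rw [ENNReal.toReal_ofReal (by norm_num)]
      _ ≤ g s := ENNReal.toReal_mono (hfin_t s) h
  have hanti : Antitone (fun t => g (max t 0)) := by
    intro t1 t2 h
    exact ENNReal.toReal_mono (hfin_t _)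
      (measure_mono (Ktset_anti (le_max_right t1 0) (max_le_max h le_rfl)))
  have hbdd : BddBelow (Set.range fun t => g (max t 0)) := by
    refine ⟨1/6, ?_⟩
    rintro x ⟨t, rfl⟩
    exact hg16 _ (le_max_right t 0)
  set A : ℝ := ⨅ t : ℝ, g (max t 0) with hA
  have hTend : Tendsto (fun t => g (max t 0)) atTop (nhds A) :=
    tendsto_atTop_ciInf hanti hbdd
  have hA16 : (1/6 : ℝ) ≤ A := le_ciInf fun t => hg16 _ (le_max_right t 0)
  have hAdiv : (0:ℝ) < A / vK := div_pos (by linarith) hvKpos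
  set L : ℝ := Real.log (A / vK) with hL
  have claim4 : Tendsto f atTop (nhds L) := by
    have hcont : Tendsto (fun t => Real.log (g (max t 0) / vK)) atTop (nhds L) :=
      (Real.continuousAt_log (ne_of_gt hAdiv)).tendsto.comp (hTend.div_const vK)
    refine hcont.congr' ?_
    filter_upwards [eventually_ge_atTop (0:ℝ)] with t ht
    rw [hfeq t, max_eq_left ht]
  -- f 2 < 0
  have hf2 : f 2 < 0 := by
    have he2 : (7:ℝ) < Real.exp 2 := by
      have h1 : Real.exp 2 = Real.exp 1 * Real.exp 1 := by
        rw [← Real.exp_add]; norm_num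
      nlinarith [Real.exp_one_gt_d9]
    have hDsub : ebox (9/10) 1 1 (3/2) ⊆ Kset := by
      rintro p ⟨⟨h1, h2⟩, h3, h4⟩
      exact ⟨⟨by linarith, h2⟩, by linarith, by linarith⟩
    have hdisj : ∀ p : EuclideanSpace ℝ (Fin 2),
        p ∈ Ktset 2 → p ∉ ebox (9/10) 1 1 (3/2) := by
      rintro p ⟨⟨hp1, hp2⟩, hA1, hA2⟩ ⟨⟨h1, h2⟩, h3, h4⟩
      have hee : Real.exp 2 * (Real.exp (-2 : ℝ) * p 1) = p 1 := by
        rw [← mul_assoc, ← Real.exp_add, add_neg_cancel, Real.exp_zero, one_mul]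
      have hq : (17/20 : ℝ) ≤ Real.exp (-2 : ℝ) * p 1 := by linarith
      have := mul_le_mul_of_nonneg_left hq (Real.exp_pos 2).le
      rw [hee] at this
      nlinarith
    have hsub2 : Ktset 2 ∩ Kset ⊆ Kset \ ebox (9/10) 1 1 (3/2) := by
      rintro p ⟨hp1, hp2⟩
      exact ⟨hp2, hdisj p hp1⟩
    have hvolD : volume (ebox (9/10) 1 1 (3/2)) = ENNReal.ofReal (1/20) := by
      rw [volume_ebox, ← ENNReal.ofReal_mul (by norm_num)]
      norm_num
    have hdiff : volume (Kset \ ebox (9/10) 1 1 (3/2))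
        = volume Kset - ENNReal.ofReal (1/20) := by
      rw [measure_diff hDsub (measurableSet_ebox _ _ _ _).nullMeasurableSet
        (by rw [hvolD]; exact ENNReal.ofReal_ne_top), hvolD]
    have hDle : ENNReal.ofReal (1/20) ≤ volume Kset := by
      refine le_trans ?_ (measure_mono hbox1)
      rw [hvol_box1]
      exact ENNReal.ofReal_le_ofReal (by norm_num)
    have hg2 : g 2 ≤ vK - 1/20 := by
      have h := measure_mono hsub2 (μ := volume)
      rw [hdiff] at h
      calc g 2 ≤ (volume Kset - ENNReal.ofReal (1/20)).toReal :=
            ENNReal.toReal_mono (by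
              exact fun hh => hfin (by
                simpa using (ENNReal.sub_eq_top_iff.1 hh).1)) h
        _ = vK - 1/20 := by
            rw [ENNReal.toReal_sub_of_le hDle hfin, ENNReal.toReal_ofReal (by norm_num)]
    rw [hfeq 2]
    refine Real.log_neg (div_pos (hgpos 2) hvKpos) ((div_lt_one hvKpos).2 ?_)
    linarith
  -- non-concavity
  have claim5 : ¬ ConcaveOn ℝ Set.univ f := by
    intro hConc
    have hev1 : ∀ᶠ n in atTop, L - 1 ≤ f n :=
      claim4.eventually (eventually_ge_nhds (by linarith))
    have hev2 : Tendsto (fun n : ℝ => n / 2 * f 2) atTop atBot :=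
      (tendsto_id.atTop_div_const two_pos).atTop_mul_const_of_neg hf2
    obtain ⟨n, hn2, hnf, hnlt⟩ := ((eventually_ge_atTop (2:ℝ)).and
      (hev1.and (hev2.eventually (eventually_lt_atBot (L-1))))).exists
    have hn0 : (0:ℝ) < n := by linarith
    have key := hConc.2 (Set.mem_univ (0:ℝ)) (Set.mem_univ n)
      (show (0:ℝ) ≤ 1 - 2/n by
        have : (2:ℝ)/n ≤ 1 := (div_le_one hn0).2 (by linarith)
        linarith)
      (show (0:ℝ) ≤ 2/n by positivity)
      (show (1 - 2/n) + 2/n = 1 by ring)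
    have hsm : (1 - 2/n) • (0:ℝ) + (2/n) • n = 2 := by
      rw [smul_eq_mul, smul_eq_mul, mul_zero, zero_add]
      field_simp
    rw [hsm, claim1, smul_eq_mul, smul_eq_mul, mul_zero, zero_add] at key
    -- key : 2/n * f n ≤ f 2
    have hkey2 : f n ≤ n / 2 * f 2 := by
      have h := mul_le_mul_of_nonneg_left key (by positivity : (0:ℝ) ≤ n/2)
      calc f n = n/2 * (2/n * f n) := by field_simp
        _ ≤ n/2 * f 2 := h
    linarith
  exact ⟨claim1, claim2, claim3, ⟨L, claim4⟩, claim5⟩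
end Main
end
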